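/- For every real number a > 0 and every natural number n ≥ 1 with n ≤ a/π, one has ∑_{i=1}^{n} (⌊a − π·i⌋ + 1)² ≤ a³/(3π) + (1/2 + 1/π)·a² + (1 + π/6 + 1/π)·a, where ⌊·⌋ denotes the integer floor. -/

import Mathlib

open Real

theorem stmt16 (a : ℝ) (ha : 0 < a) (n : ℕ) (hn : 1 ≤ n)
    (hna : (n : ℝ) ≤ a / π) :
    ∑ i ∈ Finset.Icc 1 n, ((⌊a - π * (i : ℝ)⌋ : ℝ) + 1) ^ 2 ≤
      a ^ 3 / (3 * π) + (1 / 2 + 1 / π) * a ^ 2 + (1 + π / 6 + 1 / π) * a := by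
  have hπ : (3 : ℝ) < π := Real.pi_gt_three
  have hπ0 : (0 : ℝ) < π := by linarith
  have hna' : π * n ≤ a := by
    rw [le_div_iff₀ hπ0] at hna; linarith [hna]
  set g : ℕ → ℝ := fun i => (a + 1 - π * i) ^ 3 / (3 * π) with hg
  have hstep : ∀ i ∈ Finset.Icc 1 n,
      ((⌊a - π * (i : ℝ)⌋ : ℝ) + 1) ^ 2 ≤ g (i - 1) - g i := by
    intro i hi
    simp only [Finset.mem_Icc] at hi
    obtain ⟨hi1, hin⟩ := hi
    have hiℝ : (i : ℝ) ≤ n := Nat.cast_le.mpr hin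
    have hu : 0 ≤ a - π * i := by nlinarith [hna']
    have hfl : (⌊a - π * (i : ℝ)⌋ : ℝ) ≤ a - π * i := Int.floor_le _
    have hfl0 : (0 : ℝ) ≤ (⌊a - π * (i : ℝ)⌋ : ℝ) := by
      exact_mod_cast Int.floor_nonneg.mpr hu
    have hsq : ((⌊a - π * (i : ℝ)⌋ : ℝ) + 1) ^ 2 ≤ (a - π * i + 1) ^ 2 := by
      nlinarith
    have hcast : ((i - 1 : ℕ) : ℝ) = (i : ℝ) - 1 := by
      have := Nat.cast_sub hi1 (R := ℝ)
      simpa using this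
    have hkey : (a - π * i + 1) ^ 2 ≤ g (i - 1) - g i := by
      simp only [hg, hcast]
      rw [div_sub_div_same, le_div_iff₀ (by linarith : (0:ℝ) < 3 * π)]
      nlinarith [hu, hπ0, sq_nonneg (a - π * i + 1), mul_pos hπ0 hπ0]
    linarith
  have hsum : ∑ i ∈ Finset.Icc 1 n, ((⌊a - π * (i : ℝ)⌋ : ℝ) + 1) ^ 2 ≤
      ∑ i ∈ Finset.Icc 1 n, (g (i - 1) - g i) := Finset.sum_le_sum hstep
  have htel : ∀ m : ℕ, ∑ i ∈ Finset.Icc 1 m, (g (i - 1) - g i) = g 0 - g m := by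
    intro m
    induction m with
    | zero => simp
    | succ k ih =>
      rw [Finset.sum_Icc_succ_top (by omega : 1 ≤ k + 1), ih]
      simp only [Nat.add_sub_cancel]
      ring
  have hgn : (1 : ℝ) ≤ (a + 1 - π * n) ^ 3 := by
    have h1 : (1 : ℝ) ≤ a + 1 - π * n := by linarith
    have h2 : (1 : ℝ) ≤ (a + 1 - π * n) ^ 2 := by nlinarith
    nlinarith
  have hfin : g 0 - g n ≤ a ^ 3 / (3 * π) + (1 / 2 + 1 / π) * a ^ 2
      + (1 + π / 6 + 1 / π) * a := by
    have h1 : g 0 - g n ≤ ((a + 1) ^ 3 - 1) / (3 * π) := by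
      simp only [hg, Nat.cast_zero, mul_zero, sub_zero]
      rw [div_sub_div_same]
      apply div_le_div_of_nonneg_right ?_ (by linarith)
      · linarith
    refine h1.trans ?_
    have hkey : a ^ 3 / (3 * π) + (1 / 2 + 1 / π) * a ^ 2 + (1 + π / 6 + 1 / π) * a
        = ((a + 1) ^ 3 - 1) / (3 * π) + a ^ 2 / 2 + (1 + π / 6) * a := by
      field_simp
      ring
    rw [hkey]
    nlinarith [sq_nonneg a, mul_pos hπ0 ha]
  calc ∑ i ∈ Finset.Icc 1 n, ((⌊a - π * (i : ℝ)⌋ : ℝ) + 1) ^ 2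
      ≤ g 0 - g n := by rw [← htel n]; exact hsum
    _ ≤ _ := hfin
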